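/- arXiv:2011.00729 — 2 statements merged into one kernel-verified Lean document; each statement's English description precedes it below -/
import Mathlib

section
/- Assume (C, E, s) is an n-exangulated category in which, for every object X, the morphism X → 0 is a trivial inflation and the morphism 0 → X is a trivial deflation; for each object X fix a distinguished n-exangle X → 0 → ⋯ → 0 → ΣX ⇢(δ_X), and let Σ : C → C be the induced functor. Then Σ is fully faithful: for every pair of objects X₀, Y₀, the map C(X₀, Y₀) → C(ΣX₀, ΣY₀), f₀ ↦ Σf₀, is bijective. -/
/-!
Common definitions: complexes of length `n+2`, `n`-exangulated categories
(Herschend–Liu–Nakaoka), and `(n+2)`-angulated categories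
(Geiss–Keller–Oppermann), formalized from scratch.
-/

open CategoryTheory CategoryTheory.Limits Opposite ZeroObject

universe v u

namespace Paper

/-- A complex concentrated in degrees `0, …, n+1`.  Only the objects in degrees
`0, …, n+1` and the differentials `d 0, …, d n` carry information; all objects in
higher degrees are required to be zero. -/
structure ExCpx (n : ℕ) (C : Type u) [Category.{v} C] [Preadditive C] [HasZeroObject C] where
  obj : ℕ → C
  d : ∀ i, obj i ⟶ obj (i + 1)
  dd : ∀ i, i + 1 ≤ n → d i ≫ d (i + 1) = 0
  isZero_of_gt : ∀ i, n + 1 < i → IsZero (obj i)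

variable {C : Type u} [Category.{v} C] [Preadditive C] [HasZeroObject C] [HasFiniteBiproducts C] [HasBinaryBiproducts C]

/-- Morphisms of complexes of length `n+2`. -/
structure CpxHom {n : ℕ} (X Y : ExCpx n C) where
  f : ∀ i, X.obj i ⟶ Y.obj i
  comm : ∀ i, i ≤ n → X.d i ≫ f (i + 1) = f i ≫ Y.d i

/-- The identity morphism of a complex. -/
def CpxHom.id {n : ℕ} (X : ExCpx n C) : CpxHom X X :=
  ⟨fun _ => 𝟙 _, fun i _ => by simp⟩

/-- Composition of morphisms of complexes. -/
def CpxHom.comp {n : ℕ} {X Y Z : ExCpx n C} (φ : CpxHom X Y) (ψ : CpxHom Y Z) : CpxHom X Z :=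
  ⟨fun i => φ.f i ≫ ψ.f i, fun i hi => by
    rw [← Category.assoc, φ.comm i hi, Category.assoc, ψ.comm i hi, ← Category.assoc]⟩

/-- Chain homotopy between two morphisms of complexes of length `n+2`,
for complexes concentrated in degrees `0, …, n+1`. -/
def Homotopic (n : ℕ) {X Y : ExCpx n C} (φ ψ : CpxHom X Y) : Prop :=
  ∃ h : ∀ i, X.obj (i + 1) ⟶ Y.obj i,
    (φ.f 0 - ψ.f 0 = X.d 0 ≫ h 0) ∧
    (∀ i, i + 1 ≤ n → φ.f (i + 1) - ψ.f (i + 1) = X.d (i + 1) ≫ h (i + 1) + h i ≫ Y.d i) ∧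
    (φ.f (n + 1) - ψ.f (n + 1) = h n ≫ Y.d n)

/-- Homotopy equivalence of complexes which is the identity on the two end terms. -/
def FixedEndsHtpyEquiv (n : ℕ) (X Y : ExCpx n C) (h0 : X.obj 0 = Y.obj 0)
    (h1 : X.obj (n + 1) = Y.obj (n + 1)) : Prop :=
  ∃ (u : CpxHom X Y) (v : CpxHom Y X),
    u.f 0 = eqToHom h0 ∧ u.f (n + 1) = eqToHom h1 ∧
    v.f 0 = eqToHom h0.symm ∧ v.f (n + 1) = eqToHom h1.symm ∧
    Homotopic n (u.comp v) (CpxHom.id X) ∧ Homotopic n (v.comp u) (CpxHom.id Y)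

/-- `EE E B A` is the abelian group `E(B, A)` of `E`-extensions. -/
abbrev EE (E : Cᵒᵖ ⥤ C ⥤ AddCommGrpCat.{v}) (B A : C) : Type v := (E.obj (op B)).obj A

/-- Covariant action `f_* δ` of `E` on extensions. -/
def push {E : Cᵒᵖ ⥤ C ⥤ AddCommGrpCat.{v}} {B A A' : C} (f : A ⟶ A') (δ : EE E B A) :
    EE E B A' := ((E.obj (op B)).map f) δ

/-- Contravariant action `g^* δ` of `E` on extensions. -/
def pull {E : Cᵒᵖ ⥤ C ⥤ AddCommGrpCat.{v}} {B B' A : C} (g : B' ⟶ B) (δ : EE E B A) :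
    EE E B' A := ((E.map g.op).app A) δ

/-- Transport of extensions along equalities of objects. -/
def castE {E : Cᵒᵖ ⥤ C ⥤ AddCommGrpCat.{v}} {B B' A A' : C} (hB : B = B') (hA : A = A')
    (δ : EE E B A) : EE E B' A' := by subst hB; subst hA; exact δ

/-- The type of a "distinguished `n`-exangle" predicate. -/
def DistType (n : ℕ) (C : Type u) [Category.{v} C] [Preadditive C] [HasZeroObject C]
    (E : Cᵒᵖ ⥤ C ⥤ AddCommGrpCat.{v}) : Type (max u v) :=
  ∀ X : ExCpx n C, EE E (X.obj (n + 1)) (X.obj 0) → Prop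

/-- `f` is an inflation: it appears as the `0`-th differential of some
distinguished `n`-exangle. -/
def InflationOf {n : ℕ} {E : Cᵒᵖ ⥤ C ⥤ AddCommGrpCat.{v}} (D : DistType n C E)
    {A B : C} (f : A ⟶ B) : Prop :=
  ∃ (X : ExCpx n C) (δ : EE E (X.obj (n + 1)) (X.obj 0)) (h0 : X.obj 0 = A) (h1 : X.obj 1 = B),
    D X δ ∧ X.d 0 = eqToHom h0 ≫ f ≫ eqToHom h1.symm

/-- `f` is a deflation: it appears as the `n`-th differential of some
distinguished `n`-exangle. -/
def DeflationOf {n : ℕ} {E : Cᵒᵖ ⥤ C ⥤ AddCommGrpCat.{v}} (D : DistType n C E)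
    {A B : C} (f : A ⟶ B) : Prop :=
  ∃ (X : ExCpx n C) (δ : EE E (X.obj (n + 1)) (X.obj 0)) (h0 : X.obj n = A)
    (h1 : X.obj (n + 1) = B),
    D X δ ∧ X.d n = eqToHom h0 ≫ f ≫ eqToHom h1.symm

/-- The mapping cone of a morphism of complexes whose `0`-th component is
(an identity up to equality of objects):
`X₁ → X₂ ⊕ Y₁ → ⋯ → X_{n+1} ⊕ Yₙ → Y_{n+1}` with the usual matrix differentials. -/
def IsMappingCone (n : ℕ) {X Y : ExCpx n C} (φ : CpxHom X Y) (M : ExCpx n C) : Prop :=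
  ∃ (e0 : M.obj 0 = X.obj 1) (etop : M.obj (n + 1) = Y.obj (n + 1))
    (emid : ∀ i, 1 ≤ i → i ≤ n → M.obj i = ((X.obj (i + 1)) ⊞ (Y.obj i))),
    (∀ hn : 1 ≤ n,
      M.d 0 = eqToHom e0 ≫ biprod.lift (-(X.d 1)) (φ.f 1) ≫ eqToHom (emid 1 le_rfl hn).symm) ∧
    (∀ i (h1 : 1 ≤ i) (h2 : i + 1 ≤ n),
      M.d i = eqToHom (emid i (by omega) (by omega)) ≫
        biprod.desc (biprod.lift (-(X.d (i + 1))) (φ.f (i + 1))) (biprod.lift 0 (Y.d i)) ≫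
        eqToHom (emid (i + 1) (by omega) (by omega)).symm) ∧
    (∀ hn : 1 ≤ n,
      M.d n = eqToHom (emid n hn le_rfl) ≫ biprod.desc (φ.f (n + 1)) (Y.d n) ≫ eqToHom etop.symm)

/-- The mapping cocone of a morphism of complexes whose `(n+1)`-st component is
(an identity up to equality of objects):
`X₀ → Y₀ ⊕ X₁ → ⋯ → Y_{n-1} ⊕ Xₙ → Yₙ`. -/
def IsMappingCocone (n : ℕ) {X Y : ExCpx n C} (φ : CpxHom X Y) (M : ExCpx n C) : Prop :=
  ∃ (e0 : M.obj 0 = X.obj 0) (etop : M.obj (n + 1) = Y.obj n)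
    (emid : ∀ i, i + 1 ≤ n → M.obj (i + 1) = ((Y.obj i) ⊞ (X.obj (i + 1)))),
    (∀ hn : 1 ≤ n,
      M.d 0 = eqToHom e0 ≫ biprod.lift (φ.f 0) (X.d 0) ≫ eqToHom (emid 0 hn).symm) ∧
    (∀ i (h2 : i + 2 ≤ n),
      M.d (i + 1) = eqToHom (emid i (by omega)) ≫
        biprod.desc (biprod.lift (-(Y.d i)) 0) (biprod.lift (φ.f (i + 1)) (X.d (i + 1))) ≫
        eqToHom (emid (i + 1) (by omega)).symm) ∧
    (∀ i (hi : i + 1 = n),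
      M.d (i + 1) = eqToHom (emid i hi.le) ≫
        biprod.desc (-(Y.d i) ≫ eqToHom (show Y.obj (i + 1) = Y.obj n by rw [hi]))
          (φ.f (i + 1) ≫ eqToHom (show Y.obj (i + 1) = Y.obj n by rw [hi])) ≫
        eqToHom (show Y.obj n = M.obj (i + 2) by subst hi; exact etop.symm))

/-- An `n`-exangulated structure `(𝔼, 𝔰)` on an additive category `C`:
`Dist X δ` says that `⟨X, δ⟩` is a distinguished `n`-exangle (i.e. `𝔰(δ) = [X]`),
together with all the axioms of Herschend–Liu–Nakaoka: `𝔰` is an exact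
realization ((R0), (R1), (R2), realizing every extension, with values in
homotopy classes of complexes with fixed end terms) satisfying (EA1), (EA2)
and (EA2op). -/
structure NExStruct (n : ℕ) (C : Type u) [Category.{v} C] [Preadditive C] [HasZeroObject C]
    [HasFiniteBiproducts C] [HasBinaryBiproducts C] (E : Cᵒᵖ ⥤ C ⥤ AddCommGrpCat.{v}) : Type (max u v) where
  Dist : DistType n C E
  /-- every extension is realized by some distinguished `n`-exangle -/
  realize : ∀ {A B : C} (δ : EE E B A),
    ∃ (X : ExCpx n C) (h0 : X.obj 0 = A) (h1 : X.obj (n + 1) = B),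
      Dist X (castE h1.symm h0.symm δ)
  /-- distinguished `n`-exangles are `E`-attached complexes -/
  attached_push : ∀ (X : ExCpx n C) (δ : EE E (X.obj (n + 1)) (X.obj 0)),
    Dist X δ → push (X.d 0) δ = 0
  attached_pull : ∀ (X : ExCpx n C) (δ : EE E (X.obj (n + 1)) (X.obj 0)),
    Dist X δ → pull (X.d n) δ = 0
  /-- the realization takes values in homotopy equivalence classes: closure -/
  dist_htpy : ∀ (X Y : ExCpx n C) (h0 : X.obj 0 = Y.obj 0) (h1 : X.obj (n + 1) = Y.obj (n + 1))
    (δ : EE E (X.obj (n + 1)) (X.obj 0)),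
    Dist X δ → FixedEndsHtpyEquiv n X Y h0 h1 → Dist Y (castE h1 h0 δ)
  /-- the realization takes values in homotopy equivalence classes: uniqueness -/
  dist_unique : ∀ (X Y : ExCpx n C) (h0 : X.obj 0 = Y.obj 0) (h1 : X.obj (n + 1) = Y.obj (n + 1))
    (δ : EE E (X.obj (n + 1)) (X.obj 0)),
    Dist X δ → Dist Y (castE h1 h0 δ) → FixedEndsHtpyEquiv n X Y h0 h1
  /-- (R0): morphisms of extensions lift to morphisms of the realizing complexes -/
  liftMor : ∀ (X Y : ExCpx n C) (δ : EE E (X.obj (n + 1)) (X.obj 0))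
    (ρ : EE E (Y.obj (n + 1)) (Y.obj 0)) (a : X.obj 0 ⟶ Y.obj 0)
    (c : X.obj (n + 1) ⟶ Y.obj (n + 1)),
    Dist X δ → Dist Y ρ → push a δ = pull c ρ →
    ∃ φ : CpxHom X Y, φ.f 0 = a ∧ φ.f (n + 1) = c
  /-- (R1), contravariant exactness at the middle terms -/
  exact_contra_mid : ∀ (X : ExCpx n C) (δ : EE E (X.obj (n + 1)) (X.obj 0)), Dist X δ →
    ∀ (W : C) (i : ℕ), i + 1 ≤ n → ∀ g : W ⟶ X.obj (i + 1),
      g ≫ X.d (i + 1) = 0 → ∃ h : W ⟶ X.obj i, h ≫ X.d i = g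
  /-- (R1), contravariant exactness at the last term -/
  exact_contra_top : ∀ (X : ExCpx n C) (δ : EE E (X.obj (n + 1)) (X.obj 0)), Dist X δ →
    ∀ (W : C) (g : W ⟶ X.obj (n + 1)), pull g δ = 0 → ∃ h : W ⟶ X.obj n, h ≫ X.d n = g
  /-- (R1), covariant exactness at the middle terms -/
  exact_cov_mid : ∀ (X : ExCpx n C) (δ : EE E (X.obj (n + 1)) (X.obj 0)), Dist X δ →
    ∀ (W : C) (i : ℕ), i + 1 ≤ n → ∀ g : X.obj (i + 1) ⟶ W,
      X.d i ≫ g = 0 → ∃ h : X.obj (i + 2) ⟶ W, X.d (i + 1) ≫ h = g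
  /-- (R1), covariant exactness at the first term -/
  exact_cov_bot : ∀ (X : ExCpx n C) (δ : EE E (X.obj (n + 1)) (X.obj 0)), Dist X δ →
    ∀ (W : C) (g : X.obj 0 ⟶ W), push g δ = 0 → ∃ h : X.obj 1 ⟶ W, X.d 0 ≫ h = g
  /-- (R2): the zero extension `0 ∈ E(0, A)` is realized by the trivial complex -/
  r2 : ∀ A : C, ∃ X : ExCpx n C, X.obj 0 = A ∧ IsIso (X.d 0) ∧
    (∀ i, 2 ≤ i → IsZero (X.obj i)) ∧ Dist X 0
  /-- (R2), dual: the zero extension `0 ∈ E(A, 0)` is realized by the trivial complex -/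
  r2op : ∀ A : C, ∃ X : ExCpx n C, X.obj (n + 1) = A ∧ IsIso (X.d n) ∧
    (∀ i, i + 1 ≤ n → IsZero (X.obj i)) ∧ Dist X 0
  /-- (EA1): compositions of inflations are inflations -/
  ea1_infl : ∀ {A B D : C} (f : A ⟶ B) (g : B ⟶ D),
    InflationOf Dist f → InflationOf Dist g → InflationOf Dist (f ≫ g)
  /-- (EA1): compositions of deflations are deflations -/
  ea1_defl : ∀ {A B D : C} (f : A ⟶ B) (g : B ⟶ D),
    DeflationOf Dist f → DeflationOf Dist g → DeflationOf Dist (f ≫ g)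
  /-- (EA2): good lifts exist -/
  ea2 : ∀ (X Y : ExCpx n C) (h0 : Y.obj 0 = X.obj 0) (ρ : EE E (Y.obj (n + 1)) (Y.obj 0))
    (c : X.obj (n + 1) ⟶ Y.obj (n + 1)),
    Dist Y ρ → Dist X (castE rfl h0 (pull c ρ)) →
    ∃ φ : CpxHom X Y, φ.f 0 = eqToHom h0.symm ∧ φ.f (n + 1) = c ∧
      ∃ (M : ExCpx n C) (hM0 : M.obj 0 = X.obj 1) (hMtop : M.obj (n + 1) = Y.obj (n + 1)),
        IsMappingCone n φ M ∧
        Dist M (castE hMtop.symm hM0.symm (push (eqToHom h0 ≫ X.d 0) ρ))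
  /-- (EA2op): dually, good lifts exist -/
  ea2op : ∀ (X Y : ExCpx n C) (htop : Y.obj (n + 1) = X.obj (n + 1))
    (ρ : EE E (Y.obj (n + 1)) (Y.obj 0)) (a : Y.obj 0 ⟶ X.obj 0),
    Dist Y ρ → Dist X (castE htop rfl (push a ρ)) →
    ∃ φ : CpxHom Y X, φ.f 0 = a ∧ φ.f (n + 1) = eqToHom htop ∧
      ∃ (M : ExCpx n C) (hM0 : M.obj 0 = Y.obj 0) (hMtop : M.obj (n + 1) = X.obj n),
        IsMappingCocone n φ M ∧
        Dist M (castE hMtop.symm hM0.symm (pull (X.d n ≫ eqToHom htop.symm) ρ))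

/-- The morphism `A → 0` is a trivial inflation: it embeds in a distinguished
`n`-exangle `A → 0 → ⋯ → 0 → Y ⇢ δ`. -/
def TrivialInflation {n : ℕ} {E : Cᵒᵖ ⥤ C ⥤ AddCommGrpCat.{v}} (σ : NExStruct n C E)
    (A : C) : Prop :=
  ∃ (X : ExCpx n C) (δ : EE E (X.obj (n + 1)) (X.obj 0)),
    σ.Dist X δ ∧ X.obj 0 = A ∧ ∀ i, 1 ≤ i → i ≤ n → IsZero (X.obj i)

/-- The morphism `0 → A` is a trivial deflation: it embeds in a distinguished
`n`-exangle `Z → 0 → ⋯ → 0 → A ⇢ δ`. -/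
def TrivialDeflation {n : ℕ} {E : Cᵒᵖ ⥤ C ⥤ AddCommGrpCat.{v}} (σ : NExStruct n C E)
    (A : C) : Prop :=
  ∃ (X : ExCpx n C) (δ : EE E (X.obj (n + 1)) (X.obj 0)),
    σ.Dist X δ ∧ X.obj (n + 1) = A ∧ ∀ i, 1 ≤ i → i ≤ n → IsZero (X.obj i)

/-- An `(n+2)`-`Σ`-sequence `A₀ → A₁ → ⋯ → A_{n+1} → Σ A₀`. -/
structure AngSeq (n : ℕ) (C : Type u) [Category.{v} C] (S : C ⥤ C) where
  obj : ℕ → C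
  d : ∀ i, obj i ⟶ obj (i + 1)
  last : obj (n + 1) ⟶ S.obj (obj 0)

/-- A morphism of `(n+2)`-`Σ`-sequences. -/
structure AngHom {n : ℕ} {S : C ⥤ C} (T T' : AngSeq n C S) where
  f : ∀ i, T.obj i ⟶ T'.obj i
  comm : ∀ i, i ≤ n → T.d i ≫ f (i + 1) = f i ≫ T'.d i
  comm_last : T.last ≫ S.map (f 0) = f (n + 1) ≫ T'.last

/-- `T` and `T'` are isomorphic `(n+2)`-`Σ`-sequences. -/
def IsIsoSeq (n : ℕ) {S : C ⥤ C} (T T' : AngSeq n C S) : Prop :=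
  ∃ φ : AngHom T T', ∀ i, i ≤ n + 1 → IsIso (φ.f i)

/-- `Z` is a direct sum of the `(n+2)`-`Σ`-sequences `X` and `Y`. -/
def IsDirectSumSeq (n : ℕ) {S : C ⥤ C} (Z X Y : AngSeq n C S) : Prop :=
  ∃ (p : AngHom Z X) (q : AngHom Z Y) (ix : AngHom X Z) (iy : AngHom Y Z),
    (∀ i, i ≤ n + 1 → ix.f i ≫ p.f i = 𝟙 _) ∧ (∀ i, i ≤ n + 1 → iy.f i ≫ q.f i = 𝟙 _) ∧
    (∀ i, i ≤ n + 1 → ix.f i ≫ q.f i = 0) ∧ (∀ i, i ≤ n + 1 → iy.f i ≫ p.f i = 0) ∧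
    (∀ i, i ≤ n + 1 → p.f i ≫ ix.f i + q.f i ≫ iy.f i = 𝟙 _)

/-- `R` is the left rotation of the `(n+2)`-`Σ`-sequence `T`. -/
def IsLeftRotation (n : ℕ) {S : C ⥤ C} (T R : AngSeq n C S) : Prop :=
  ∃ (e : ∀ i, i ≤ n → R.obj i = T.obj (i + 1)) (etop : R.obj (n + 1) = S.obj (T.obj 0)),
    (∀ i (hi : i + 1 ≤ n), R.d i = eqToHom (e i (by omega)) ≫ T.d (i + 1) ≫
      eqToHom (e (i + 1) hi).symm) ∧
    (R.d n = eqToHom (e n le_rfl) ≫ T.last ≫ eqToHom etop.symm) ∧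
    (R.last = eqToHom etop ≫ (((-1 : ℤ) ^ n) • S.map (T.d 0)) ≫
      eqToHom (congrArg S.obj (e 0 (Nat.zero_le n))).symm)

/-- `M` is the mapping cone of the morphism `Φ` of `(n+2)`-`Σ`-sequences. -/
def IsMappingConeSeq (n : ℕ) {S : C ⥤ C} {T T' : AngSeq n C S} (Φ : AngHom T T')
    (M : AngSeq n C S) : Prop :=
  ∃ (e : ∀ i, i ≤ n → M.obj i = ((T.obj (i + 1)) ⊞ (T'.obj i)))
    (etop : M.obj (n + 1) = ((S.obj (T.obj 0)) ⊞ (T'.obj (n + 1)))),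
    (∀ i (hi : i + 1 ≤ n), M.d i = eqToHom (e i (by omega)) ≫
        biprod.desc (biprod.lift (-(T.d (i + 1))) (Φ.f (i + 1))) (biprod.lift 0 (T'.d i)) ≫
        eqToHom (e (i + 1) hi).symm) ∧
    (M.d n = eqToHom (e n le_rfl) ≫
        biprod.desc (biprod.lift (-(T.last)) (Φ.f (n + 1))) (biprod.lift 0 (T'.d n)) ≫
        eqToHom etop.symm) ∧
    (M.last = eqToHom etop ≫
        biprod.desc ((-(S.map (T.d 0) ≫ S.map biprod.inl)) + (S.map (Φ.f 0) ≫ S.map biprod.inr))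
          (T'.last ≫ S.map biprod.inr) ≫
        eqToHom (congrArg S.obj (e 0 (Nat.zero_le n))).symm)

/-- An `(n+2)`-angulated structure `(Σ, Θ)` on an additive category `C`
(Geiss–Keller–Oppermann): `Σ = S` is an auto-equivalence, `Θ = Theta` is a class of
`(n+2)`-`Σ`-sequences satisfying the axioms (N1)–(N4). -/
structure NAngStruct (n : ℕ) (C : Type u) [Category.{v} C] [Preadditive C] [HasZeroObject C]
    [HasFiniteBiproducts C] [HasBinaryBiproducts C] (S : C ⥤ C) : Type (max u v) where
  /-- `Σ` is an auto-equivalence -/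
  eqv : S.IsEquivalence
  Theta : AngSeq n C S → Prop
  /-- (N1)(a): closed under isomorphisms -/
  iso_closed : ∀ T T' : AngSeq n C S, Theta T → IsIsoSeq n T T' → Theta T'
  /-- (N1)(a): closed under direct sums -/
  sum_closed : ∀ Z X Y : AngSeq n C S, Theta X → Theta Y → IsDirectSumSeq n Z X Y → Theta Z
  /-- (N1)(a): closed under direct summands -/
  summand_closed : ∀ Z X Y : AngSeq n C S, Theta Z → IsDirectSumSeq n Z X Y → Theta X
  /-- (N1)(b): trivial sequences belong to `Theta` -/
  trivial_mem : ∀ T : AngSeq n C S, IsIso (T.d 0) →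
    (∀ i, 2 ≤ i → i ≤ n + 1 → IsZero (T.obj i)) → Theta T
  /-- (N1)(c): every morphism extends to an `(n+2)`-angle -/
  extend_mor : ∀ {A B : C} (f : A ⟶ B), ∃ T : AngSeq n C S, Theta T ∧
    ∃ (h0 : T.obj 0 = A) (h1 : T.obj 1 = B), T.d 0 = eqToHom h0 ≫ f ≫ eqToHom h1.symm
  /-- (N2): `Theta` is closed under left rotation -/
  rot : ∀ T R : AngSeq n C S, IsLeftRotation n T R → Theta T → Theta R
  /-- (N2): `Theta` is closed under right rotation -/
  rot_inv : ∀ T R : AngSeq n C S, IsLeftRotation n T R → Theta R → Theta T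
  /-- (N3): commutative squares extend to morphisms of `(n+2)`-angles -/
  n3 : ∀ T T' : AngSeq n C S, Theta T → Theta T' →
    ∀ (φ0 : T.obj 0 ⟶ T'.obj 0) (φ1 : T.obj 1 ⟶ T'.obj 1), T.d 0 ≫ φ1 = φ0 ≫ T'.d 0 →
      ∃ Φ : AngHom T T', Φ.f 0 = φ0 ∧ Φ.f 1 = φ1
  /-- (N4): the fillers can be chosen so that the mapping cone belongs to `Theta` -/
  n4 : ∀ T T' : AngSeq n C S, Theta T → Theta T' →
    ∀ (φ0 : T.obj 0 ⟶ T'.obj 0) (φ1 : T.obj 1 ⟶ T'.obj 1), T.d 0 ≫ φ1 = φ0 ≫ T'.d 0 →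
      ∃ Φ : AngHom T T', Φ.f 0 = φ0 ∧ Φ.f 1 = φ1 ∧
        ∃ M : AngSeq n C S, IsMappingConeSeq n Φ M ∧ Theta M

/-- The `(n+2)`-angulated structure `α` on `C` is `E`-compatible with the
`n`-exangulated structure `σ`: every `(n+2)`-angle, viewed as a complex, is a
distinguished `n`-exangle for some extension `δ`. -/
def ECompatible {n : ℕ} {E : Cᵒᵖ ⥤ C ⥤ AddCommGrpCat.{v}} (σ : NExStruct n C E)
    {S : C ⥤ C} (α : NAngStruct n C S) : Prop :=
  ∀ T : AngSeq n C S, α.Theta T →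
    ∃ (X : ExCpx n C) (h : ∀ i, i ≤ n + 1 → X.obj i = T.obj i),
      (∀ i (hi : i ≤ n), X.d i = eqToHom (h i (by omega)) ≫ T.d i ≫
        eqToHom (h (i + 1) (by omega)).symm) ∧
      ∃ δ : EE E (X.obj (n + 1)) (X.obj 0), σ.Dist X δ

/-- The realization `𝔯` of the bifunctor `E¹ = C(-, Σ-)` induced by the chosen
distinguished `n`-exangles `X → 0 → ⋯ → 0 → ΣX ⇢ δ_X`:
`𝔯(ε) := 𝔰(ε^* δ_{X₀})`, i.e. `⟨X, ε⟩` is `𝔯`-distinguished iff `⟨X, ε^* δ_{X₀}⟩`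
is `𝔰`-distinguished. -/
def DistR {n : ℕ} {E : Cᵒᵖ ⥤ C ⥤ AddCommGrpCat.{v}} (σ : NExStruct n C E) (F : C ⥤ C)
    (δ : ∀ X : C, EE E (F.obj X) X) :
    ∀ X : ExCpx n C, (X.obj (n + 1) ⟶ F.obj (X.obj 0)) → Prop :=
  fun X ε => σ.Dist X (pull ε (δ (X.obj 0)))

/-- Inflations with respect to a hom-valued (i.e. `E¹ = C(-, Σ-)`-valued)
distinguished-`n`-exangle predicate. -/
def HInflationOf {n : ℕ} (F : C ⥤ C)
    (R : ∀ X : ExCpx n C, (X.obj (n + 1) ⟶ F.obj (X.obj 0)) → Prop)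
    {A B : C} (f : A ⟶ B) : Prop :=
  ∃ (X : ExCpx n C) (ε : X.obj (n + 1) ⟶ F.obj (X.obj 0)) (h0 : X.obj 0 = A)
    (h1 : X.obj 1 = B), R X ε ∧ X.d 0 = eqToHom h0 ≫ f ≫ eqToHom h1.symm

/-- Deflations with respect to a hom-valued distinguished-`n`-exangle predicate. -/
def HDeflationOf {n : ℕ} (F : C ⥤ C)
    (R : ∀ X : ExCpx n C, (X.obj (n + 1) ⟶ F.obj (X.obj 0)) → Prop)
    {A B : C} (f : A ⟶ B) : Prop :=
  ∃ (X : ExCpx n C) (ε : X.obj (n + 1) ⟶ F.obj (X.obj 0)) (h0 : X.obj n = A)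
    (h1 : X.obj (n + 1) = B), R X ε ∧ X.d n = eqToHom h0 ≫ f ≫ eqToHom h1.symm

set_option linter.unusedSectionVars false

section FFHelpers

variable {E : Cᵒᵖ ⥤ C ⥤ AddCommGrpCat.{v}}

lemma push_push {B A A' A'' : C} (f : A ⟶ A') (g : A' ⟶ A'') (δ : EE E B A) :
    push g (push f δ) = push (f ≫ g) δ := by
  simp [push, Functor.map_comp]

lemma pull_pull {B'' B' B A : C} (u : B'' ⟶ B') (v : B' ⟶ B) (δ : EE E B A) :
    pull u (pull v δ) = pull (u ≫ v) δ := by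
  simp [pull, op_comp, Functor.map_comp]

lemma push_pull {B' B A A' : C} (f : A ⟶ A') (u : B' ⟶ B) (δ : EE E B A) :
    push f (pull u δ) = pull u (push f δ) := by
  exact (congrArg (fun m => m.hom δ) ((E.map u.op).naturality f)).symm

@[simp] lemma push_id {B A : C} (δ : EE E B A) : push (𝟙 A) δ = δ := by
  simp [push]

@[simp] lemma pull_id {B A : C} (δ : EE E B A) : pull (𝟙 B) δ = δ := by
  simp [pull]

@[simp] lemma push_zero_ext {B A A' : C} (f : A ⟶ A') : push f (0 : EE E B A) = 0 :=
  map_zero _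

lemma push_add_ext {B A A' : C} (f : A ⟶ A') (x y : EE E B A) :
    push f (x + y) = push f x + push f y := map_add _ _ _

@[simp] lemma pull_zero_ext {B' B A : C} (u : B' ⟶ B) : pull u (0 : EE E B A) = 0 :=
  map_zero _

lemma push_zero_mor [∀ X : Cᵒᵖ, (E.obj X).Additive] {B A A' : C} (δ : EE E B A) :
    push (0 : A ⟶ A') δ = 0 := by
  simp [push]

lemma push_sub_mor [∀ X : Cᵒᵖ, (E.obj X).Additive] {B A A' : C} (f g : A ⟶ A')
    (δ : EE E B A) : push (f - g) δ = push f δ - push g δ := by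
  show ((E.obj (op B)).map (f - g)) δ = _
  rw [Functor.map_sub]; rfl

lemma push_add_mor [∀ X : Cᵒᵖ, (E.obj X).Additive] {B A A' : C} (f g : A ⟶ A')
    (δ : EE E B A) : push (f + g) δ = push f δ + push g δ := by
  simp [push, Functor.map_add]

lemma pull_zero_mor [E.Additive] {B' B A : C} (δ : EE E B A) :
    pull (0 : B' ⟶ B) δ = 0 := by
  have : ((0 : B' ⟶ B).op) = 0 := rfl
  simp [pull, this]

lemma pull_sub_mor [E.Additive] {B' B A : C} (u v : B' ⟶ B) (δ : EE E B A) :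
    pull (u - v) δ = pull u δ - pull v δ := by
  have h : ((u - v).op) = u.op - v.op := rfl
  show ((E.map (u - v).op).app A) δ = _
  rw [h, Functor.map_sub]; rfl

lemma castE_eq {B B' A A' : C} (hB : B = B') (hA : A = A') (δ : EE E B A) :
    castE hB hA δ = pull (eqToHom hB.symm) (push (eqToHom hA) δ) := by
  subst hB; subst hA; simp [castE]

lemma castE_zero {B B' A A' : C} (hB : B = B') (hA : A = A') :
    castE hB hA (0 : EE E B A) = 0 := by
  rw [castE_eq]; simp

end FFHelpers
/-- The key surjectivity lemma: if `⟨XX, dd⟩` is a distinguished `n`-exangle whose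
`n`-th object is zero, then every extension `τ ∈ E(XX_{n+1}, W)` is a pushforward
of `dd` along some morphism `XX₀ ⟶ W`. -/
lemma exists_push_eq {n : ℕ} {E : Cᵒᵖ ⥤ C ⥤ AddCommGrpCat.{v}}
    [∀ X : Cᵒᵖ, (E.obj X).Additive] [E.Additive]
    (σ : NExStruct n C E) (hn : 0 < n)
    (XX : ExCpx n C) (dd : EE E (XX.obj (n + 1)) (XX.obj 0)) (hdd : σ.Dist XX dd)
    (hzn : IsZero (XX.obj n)) (W : C) (τ : EE E (XX.obj (n + 1)) W) :
    ∃ a : XX.obj 0 ⟶ W, push a dd = τ := by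
  -- the combined extension over the biproduct
  have hn' : 1 ≤ n := hn
  set ω : EE E (XX.obj (n + 1)) (XX.obj 0 ⊞ W) :=
    push biprod.inl dd + push biprod.inr τ with hωdef
  obtain ⟨Z, h0, h1, hZ⟩ := σ.realize ω
  have hω' : castE h1.symm h0.symm ω = pull (eqToHom h1) (push (eqToHom h0.symm) ω) :=
    castE_eq _ _ _
  have hfst : push (biprod.fst : XX.obj 0 ⊞ W ⟶ XX.obj 0) ω = dd := by
    rw [hωdef, push_add_ext, push_push, push_push, biprod.inl_fst, biprod.inr_fst,
      push_id, push_zero_mor, add_zero]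
  have hsnd : push (biprod.snd : XX.obj 0 ⊞ W ⟶ W) ω = τ := by
    rw [hωdef, push_add_ext, push_push, push_push, biprod.inl_snd, biprod.inr_snd,
      push_id, push_zero_mor, zero_add]
  set a₀ : Z.obj 0 ⟶ XX.obj 0 := eqToHom h0 ≫ biprod.fst with ha₀
  have hpa : push a₀ (castE h1.symm h0.symm ω) = pull (eqToHom h1) dd := by
    rw [hω', ← push_pull, push_push, ha₀, ← Category.assoc, eqToHom_trans, eqToHom_refl,
      Category.id_comp, push_pull, hfst]
  have hcond : σ.Dist XX (castE h1 rfl (push a₀ (castE h1.symm h0.symm ω))) := by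
    have hc : castE h1 rfl (push a₀ (castE h1.symm h0.symm ω)) = dd := by
      rw [hpa, castE_eq, eqToHom_refl, push_id, pull_pull, eqToHom_trans, eqToHom_refl,
        pull_id]
    rw [hc]; exact hdd
  obtain ⟨φ, hφ0, hφtop, M, hM0, hMtop, hcoc, hMdist⟩ :=
    σ.ea2op XX Z h1 (castE h1.symm h0.symm ω) a₀ hZ hcond
  have hdn : XX.d n = 0 := hzn.eq_of_src _ _
  have hM0dist : σ.Dist M 0 := by
    have hz : castE hMtop.symm hM0.symm
        (pull (XX.d n ≫ eqToHom h1.symm) (castE h1.symm h0.symm ω)) = 0 := by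
      rw [hdn, zero_comp, pull_zero_mor, castE_zero]
    rwa [hz] at hMdist
  obtain ⟨e0, etop, emid, hd0, -, -⟩ := hcoc
  obtain ⟨R, hR⟩ := σ.exact_cov_bot M 0 hM0dist (M.obj 0) (𝟙 _) (by rw [push_id])
  set S : (XX.obj 0 ⊞ Z.obj (0 + 1)) ⟶ Z.obj 0 :=
    eqToHom (emid 0 hn').symm ≫ R ≫ eqToHom e0 with hS
  have hstar : biprod.lift (φ.f 0) (Z.d 0) ≫ S = 𝟙 (Z.obj 0) := by
    have h2 := hR
    rw [hd0 hn'] at h2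
    have h3 := congrArg (fun t => eqToHom e0.symm ≫ t ≫ eqToHom e0) h2
    simpa [hS, Category.assoc] using h3
  have hstar2 : φ.f 0 ≫ biprod.inl ≫ S + Z.d 0 ≫ biprod.inr ≫ S = 𝟙 (Z.obj 0) := by
    have hexpand : (biprod.lift (φ.f 0) (Z.d 0) : Z.obj 0 ⟶ _)
        = φ.f 0 ≫ biprod.inl + Z.d 0 ≫ biprod.inr := by
      apply biprod.hom_ext <;> simp
    rw [← hstar, hexpand, Preadditive.add_comp, Category.assoc, Category.assoc]
  refine ⟨biprod.inl ≫ S ≫ eqToHom h0 ≫ biprod.snd, ?_⟩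
  have hattach : push (Z.d 0) (castE h1.symm h0.symm ω) = 0 := σ.attached_push Z _ hZ
  have hω'snd : push (eqToHom h0 ≫ biprod.snd) (castE h1.symm h0.symm ω)
      = pull (eqToHom h1) τ := by
    rw [hω', ← push_pull, push_push, ← Category.assoc, eqToHom_trans, eqToHom_refl,
      Category.id_comp, push_pull, hsnd]
  have hmor : a₀ ≫ (biprod.inl ≫ S ≫ eqToHom h0 ≫ biprod.snd)
      = (eqToHom h0 ≫ biprod.snd)
        - Z.d 0 ≫ (biprod.inr ≫ S ≫ eqToHom h0 ≫ biprod.snd) := by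
    have h4 : φ.f 0 ≫ biprod.inl ≫ S = 𝟙 (Z.obj 0) - Z.d 0 ≫ biprod.inr ≫ S :=
      eq_sub_of_add_eq hstar2
    calc a₀ ≫ (biprod.inl ≫ S ≫ eqToHom h0 ≫ biprod.snd)
        = (φ.f 0 ≫ biprod.inl ≫ S) ≫ (eqToHom h0 ≫ biprod.snd) := by
          rw [hφ0]; simp only [Category.assoc]
      _ = (𝟙 (Z.obj 0) - Z.d 0 ≫ biprod.inr ≫ S) ≫ (eqToHom h0 ≫ biprod.snd) := by
          rw [h4]
      _ = _ := by
          rw [Preadditive.sub_comp, Category.id_comp]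
          simp only [Category.assoc]
  have hfinal : pull (eqToHom h1) (push (biprod.inl ≫ S ≫ eqToHom h0 ≫ biprod.snd) dd)
      = pull (eqToHom h1) τ := by
    rw [← push_pull, ← hpa, push_push, hmor, push_sub_mor, hω'snd, ← push_push, hattach,
      push_zero_ext, sub_zero]
  have hout := congrArg (fun x => pull (eqToHom h1.symm) x) hfinal
  simpa [pull_pull, eqToHom_trans, eqToHom_refl] using hout
theorem statement_9 {C : Type u} [Category.{v} C] [Preadditive C] [HasZeroObject C]
    [HasFiniteBiproducts C] [HasBinaryBiproducts C]
    (E : Cᵒᵖ ⥤ C ⥤ AddCommGrpCat.{v}) [∀ X : Cᵒᵖ, (E.obj X).Additive] [E.Additive]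
    (n : ℕ) (hn : 0 < n) (σ : NExStruct n C E)
    (htriv : ∀ X : C, TrivialInflation σ X ∧ TrivialDeflation σ X)
    (F : C ⥤ C) (cpx : C → ExCpx n C)
    (hc0 : ∀ X : C, (cpx X).obj 0 = X) (hctop : ∀ X : C, (cpx X).obj (n + 1) = F.obj X)
    (hmid : ∀ (X : C) (i : ℕ), 1 ≤ i → i ≤ n → IsZero ((cpx X).obj i))
    (δ : ∀ X : C, EE E (F.obj X) X)
    (hdist : ∀ X : C, σ.Dist (cpx X) (castE (hctop X).symm (hc0 X).symm (δ X)))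
    (hF : ∀ {X Y : C} (f : X ⟶ Y), push f (δ X) = pull (F.map f) (δ Y)) :
    ∀ X₀ Y₀ : C, Function.Bijective (fun f : X₀ ⟶ Y₀ => F.map f) := by
  intro X₀ Y₀
  constructor
  · -- injectivity
    intro f g hfg
    have hfg' : F.map f = F.map g := hfg
    have hpush : push f (δ X₀) = push g (δ X₀) := by
      rw [hF f, hF g, hfg']
    have hsub : push (f - g) (δ X₀) = 0 := by
      rw [push_sub_mor, hpush, sub_self]
    have hg' : push (eqToHom (hc0 X₀) ≫ (f - g))
        (castE (hctop X₀).symm (hc0 X₀).symm (δ X₀)) = 0 := by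
      rw [castE_eq, push_pull, push_push, ← Category.assoc, eqToHom_trans, eqToHom_refl,
        Category.id_comp, hsub, pull_zero_ext]
    obtain ⟨k, hk⟩ := σ.exact_cov_bot (cpx X₀) _ (hdist X₀) Y₀
      (eqToHom (hc0 X₀) ≫ (f - g)) hg'
    have hk0 : k = 0 := (hmid X₀ 1 le_rfl hn).eq_of_src k 0
    have h6 : f - g = 0 := by
      calc f - g = eqToHom (hc0 X₀).symm ≫ eqToHom (hc0 X₀) ≫ (f - g) := by
            rw [← Category.assoc, eqToHom_trans, eqToHom_refl, Category.id_comp]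
        _ = eqToHom (hc0 X₀).symm ≫ (cpx X₀).d 0 ≫ k := by rw [hk]
        _ = 0 := by rw [hk0, comp_zero, comp_zero]
    exact sub_eq_zero.mp h6
  · -- surjectivity
    intro h
    obtain ⟨a, ha⟩ := exists_push_eq σ hn (cpx X₀)
      (castE (hctop X₀).symm (hc0 X₀).symm (δ X₀)) (hdist X₀) (hmid X₀ n hn le_rfl) Y₀
      (pull (eqToHom (hctop X₀) ≫ h) (δ Y₀))
    refine ⟨eqToHom (hc0 X₀).symm ≫ a, ?_⟩
    show F.map (eqToHom (hc0 X₀).symm ≫ a) = h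
    have h2 : push (eqToHom (hc0 X₀).symm ≫ a) (δ X₀) = pull h (δ Y₀) := by
      have ha' := ha
      rw [castE_eq, push_pull, push_push] at ha'
      have ha'' := congrArg (fun x => pull (eqToHom (hctop X₀).symm) x) ha'
      simpa [pull_pull, eqToHom_trans, eqToHom_refl] using ha''
    have h3 : pull (F.map (eqToHom (hc0 X₀).symm ≫ a)) (δ Y₀) = pull h (δ Y₀) := by
      rw [← hF, h2]
    have h4 : pull (F.map (eqToHom (hc0 X₀).symm ≫ a) - h) (δ Y₀) = 0 := by
      rw [pull_sub_mor, h3, sub_self]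
    have hg'' : pull ((F.map (eqToHom (hc0 X₀).symm ≫ a) - h) ≫ eqToHom (hctop Y₀).symm)
        (castE (hctop Y₀).symm (hc0 Y₀).symm (δ Y₀)) = 0 := by
      rw [castE_eq, pull_pull, Category.assoc, eqToHom_trans, eqToHom_refl,
        Category.comp_id, ← push_pull, h4, push_zero_ext]
    obtain ⟨k, hk⟩ := σ.exact_contra_top (cpx Y₀) _ (hdist Y₀) _ _ hg''
    have hk0 : k = 0 := (hmid Y₀ n hn le_rfl).eq_of_tgt k 0
    have h5 : (F.map (eqToHom (hc0 X₀).symm ≫ a) - h) ≫ eqToHom (hctop Y₀).symm = 0 := by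
      rw [← hk, hk0, zero_comp]
    have h6 : F.map (eqToHom (hc0 X₀).symm ≫ a) - h = 0 := by
      have h7 := congrArg (fun t => t ≫ eqToHom (hctop Y₀)) h5
      simpa [Category.assoc, eqToHom_trans, eqToHom_refl] using h7
    exact sub_eq_zero.mp h6

end Paper
end

section
/- Assume (C, E, s) is an n-exangulated category in which, for every object X, the morphism X → 0 is a trivial inflation and the morphism 0 → X is a trivial deflation; for each object X fix a distinguished n-exangle X → 0 → ⋯ → 0 → ΣX ⇢(δ_X), let E¹ := C(−, Σ−), and let 𝔯 be the exact realization of E¹ given by 𝔯(ε) := s(ε* δ_{X₀}). Then (EA1) holds for (C, E¹, 𝔯): if f : A → B and g : B → C are both 𝔯-inflations then g ∘ f is an 𝔯-inflation, and if f and g are both 𝔯-deflations then g ∘ f is an 𝔯-deflation. -/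
/-!
Common definitions: complexes of length `n+2`, `n`-exangulated categories
(Herschend–Liu–Nakaoka), and `(n+2)`-angulated categories
(Geiss–Keller–Oppermann), formalized from scratch.
-/

open CategoryTheory CategoryTheory.Limits Opposite ZeroObject

universe v u

namespace Paper

variable {C : Type u} [Category.{v} C] [Preadditive C] [HasZeroObject C] [HasFiniteBiproducts C] [HasBinaryBiproducts C]

set_option linter.unusedSectionVars false

section Helpers

variable {E : Cᵒᵖ ⥤ C ⥤ AddCommGrpCat.{v}}

lemma pp_pull_id {B A : C} (d : EE E B A) : pull (𝟙 B) d = d := by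
  simp [pull]

lemma pp_pull_comp {B'' B' B A : C} (g : B'' ⟶ B') (h : B' ⟶ B) (d : EE E B A) :
    pull (g ≫ h) d = pull g (pull h d) := by
  simp [pull]

lemma pp_push_id {B A : C} (d : EE E B A) : push (𝟙 A) d = d := by
  simp [push]

lemma pp_push_comp {B A A' A'' : C} (f : A ⟶ A') (g : A' ⟶ A'') (d : EE E B A) :
    push (f ≫ g) d = push g (push f d) := by
  simp [push]

lemma pp_push_pull {B B' A A' : C} (f : A ⟶ A') (g : B' ⟶ B) (d : EE E B A) :
    pull g (push f d) = push f (pull g d) := by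
  have h := (E.map g.op).naturality f
  have h2 := ConcreteCategory.congr_hom h d
  rw [comp_apply, comp_apply] at h2
  exact h2

lemma pp_pull_add {B' B A : C} (g : B' ⟶ B) (x y : EE E B A) :
    pull g (x + y) = pull g x + pull g y :=
  map_add _ x y

lemma pp_pull_zero {B' B A : C} (g : B' ⟶ B) : pull g (0 : EE E B A) = 0 :=
  map_zero _

lemma pp_pull_zero_mor [E.Additive] {B' B A : C} (d : EE E B A) :
    pull (0 : B' ⟶ B) d = 0 := by
  simp [pull]

lemma pp_pull_add_mor [E.Additive] {B' B A : C} (g h : B' ⟶ B) (d : EE E B A) :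
    pull (g + h) d = pull g d + pull h d := by
  simp [pull]

lemma pp_push_zero_mor [∀ X : Cᵒᵖ, (E.obj X).Additive] {B A A' : C} (d : EE E B A) :
    push (0 : A ⟶ A') d = 0 := by
  simp [push]

lemma pp_zero_of_isZero [∀ X : Cᵒᵖ, (E.obj X).Additive] {B A : C} (hA : IsZero A)
    (d : EE E B A) : d = 0 := by
  have h1 : d = push (𝟙 A) d := (pp_push_id d).symm
  rw [h1, hA.eq_of_src (𝟙 A) 0, pp_push_zero_mor]

@[simp] lemma pp_castE_rfl_rfl {B A : C} (d : EE E B A) :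
    castE (E := E) rfl rfl d = d := rfl

lemma pp_castE_eq {B B' A A' : C} (hB : B = B') (hA : A = A') (d : EE E B A) :
    castE hB hA d = push (eqToHom hA) (pull (eqToHom hB.symm) d) := by
  subst hB; subst hA
  rw [pp_castE_rfl_rfl]
  show d = push (eqToHom rfl) (pull (eqToHom rfl) d)
  rw [eqToHom_refl, eqToHom_refl, pp_pull_id, pp_push_id]

lemma pp_unpack {A A' B B' W : C} (hA : A' = A) (hB : B' = B) (d0 : EE E B A)
    (z : EE E W A) (c : W ⟶ B')
    (h : castE rfl hA.symm z = pull c (castE hB.symm hA.symm d0)) :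
    z = pull (c ≫ eqToHom hB) d0 := by
  subst hA; subst hB
  simpa using h

end Helpers

/-- Surjectivity of `c ↦ c^* δP` for a distinguished `n`-exangle `P` whose object in
degree `1` is zero: every extension `θ ∈ E(W, P₀)` is a pullback of `δP`. -/
lemma surj_aux {C : Type u} [Category.{v} C] [Preadditive C] [HasZeroObject C]
    [HasFiniteBiproducts C] [HasBinaryBiproducts C]
    (E : Cᵒᵖ ⥤ C ⥤ AddCommGrpCat.{v}) [∀ X : Cᵒᵖ, (E.obj X).Additive] [E.Additive]
    {n : ℕ} (hn : 0 < n) (σ : NExStruct n C E)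
    (P : ExCpx n C) (δP : EE E (P.obj (n + 1)) (P.obj 0))
    (hP : σ.Dist P δP) (hP1 : IsZero (P.obj 1))
    (W : C) (θ : EE E W (P.obj 0)) :
    ∃ c : W ⟶ P.obj (n + 1), θ = pull c δP := by
  obtain ⟨V, hv0, hv1, hVdist⟩ :=
    σ.realize (pull (biprod.fst : W ⊞ P.obj (n + 1) ⟶ W) θ + pull biprod.snd δP)
  set ρ : EE E (W ⊞ P.obj (n + 1)) (P.obj 0) :=
    pull (biprod.fst : W ⊞ P.obj (n + 1) ⟶ W) θ + pull biprod.snd δP with hρdef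
  set ρ' : EE E (V.obj (n + 1)) (V.obj 0) := castE hv1.symm hv0.symm ρ with hρ'def
  have hρ' : ρ' = push (eqToHom hv0.symm) (pull (eqToHom hv1.symm.symm) ρ) :=
    pp_castE_eq hv1.symm hv0.symm ρ
  have hgen : ∀ (U : C) (u : U ⟶ W ⊞ P.obj (n + 1)),
      pull (u ≫ eqToHom hv1.symm) ρ' = push (eqToHom hv0.symm) (pull u ρ) := by
    intro U u
    rw [hρ', pp_push_pull, ← pp_pull_comp]
    have he : (u ≫ eqToHom hv1.symm) ≫ eqToHom hv1.symm.symm = u := by simp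
    rw [he]
  have hps : pull (biprod.inr ≫ eqToHom hv1.symm) ρ' = push (eqToHom hv0.symm) δP := by
    rw [hgen]
    exact congrArg (push (eqToHom hv0.symm)) (by
      rw [hρdef, pp_pull_add, ← pp_pull_comp, ← pp_pull_comp]
      simp [pp_pull_zero_mor, pp_pull_id])
  have hcan : ∀ {U : C} (x : EE E U (P.obj 0)),
      push (eqToHom hv0) (push (eqToHom hv0.symm) x) = x := by
    intro U x
    rw [← pp_push_comp, eqToHom_trans, eqToHom_refl, pp_push_id]
  have hdistP : σ.Dist P (castE rfl hv0 (pull (biprod.inr ≫ eqToHom hv1.symm) ρ')) := by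
    have hc2 : castE rfl hv0 (pull (biprod.inr ≫ eqToHom hv1.symm) ρ') = δP := by
      rw [hps, pp_castE_eq]
      simp only [eqToHom_refl, pp_pull_id]
      exact hcan δP
    rw [hc2]; exact hP
  obtain ⟨φ, hφ0, hφtop, M, hM0, hMtop, hcone, hMdist⟩ :=
    σ.ea2 P V hv0 ρ' (biprod.inr ≫ eqToHom hv1.symm) hVdist hdistP
  have hMz : IsZero (M.obj 0) := by rw [hM0]; exact hP1
  have hκ : castE hMtop.symm hM0.symm (push (eqToHom hv0 ≫ P.d 0) ρ') = 0 :=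
    pp_zero_of_isZero hMz _
  obtain ⟨H, hH⟩ := σ.exact_contra_top M _ hMdist (M.obj (n + 1)) (𝟙 (M.obj (n + 1)))
    (by rw [pp_pull_id, hκ])
  obtain ⟨e0, etop, emid, hcd0, hcmid, hcn⟩ := hcone
  have hdn := hcn hn
  set J : V.obj (n + 1) ⟶ P.obj (n + 1) ⊞ V.obj n :=
    eqToHom etop.symm ≫ H ≫ eqToHom (emid n hn le_rfl) with hJdef
  have hJ : J ≫ biprod.desc (φ.f (n + 1)) (V.d n) = 𝟙 (V.obj (n + 1)) := by
    rw [hdn] at hH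
    have h3 : H ≫ eqToHom (emid n hn le_rfl) ≫ biprod.desc (φ.f (n + 1)) (V.d n) =
        eqToHom etop := by
      simpa [Category.assoc] using congrArg (fun t => t ≫ eqToHom etop) hH
    rw [hJdef]
    simp only [Category.assoc]
    rw [h3, eqToHom_trans, eqToHom_refl]
  have hdesc : biprod.desc (φ.f (n + 1)) (V.d n) =
      biprod.fst ≫ φ.f (n + 1) + biprod.snd ≫ V.d n := by
    ext
    · simp [Preadditive.comp_add]
    · simp [Preadditive.comp_add]
  have hone : 𝟙 (V.obj (n + 1)) =
      J ≫ biprod.fst ≫ φ.f (n + 1) + J ≫ biprod.snd ≫ V.d n := by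
    rw [← hJ, hdesc, Preadditive.comp_add]
  have hVd : pull (V.d n) ρ' = 0 := σ.attached_pull V ρ' hVdist
  have hι : pull (biprod.inl ≫ eqToHom hv1.symm) ρ' = push (eqToHom hv0.symm) θ := by
    rw [hgen]
    exact congrArg (push (eqToHom hv0.symm)) (by
      rw [hρdef, pp_pull_add, ← pp_pull_comp, ← pp_pull_comp]
      simp [pp_pull_zero_mor, pp_pull_id])
  refine ⟨(biprod.inl ≫ eqToHom hv1.symm) ≫ J ≫ biprod.fst, ?_⟩
  have hstep : pull (biprod.inl ≫ eqToHom hv1.symm) ρ' =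
      push (eqToHom hv0.symm)
        (pull ((biprod.inl ≫ eqToHom hv1.symm) ≫ J ≫ biprod.fst) δP) := by
    conv_lhs => rw [show (biprod.inl ≫ eqToHom hv1.symm : W ⟶ V.obj (n+1)) =
      (biprod.inl ≫ eqToHom hv1.symm) ≫ 𝟙 (V.obj (n+1)) from (Category.comp_id _).symm]
    rw [hone, Preadditive.comp_add, pp_pull_add_mor]
    have hsum2 : pull ((biprod.inl ≫ eqToHom hv1.symm) ≫ J ≫ biprod.snd ≫ V.d n) ρ' = 0 := by
      rw [show (biprod.inl ≫ eqToHom hv1.symm) ≫ J ≫ biprod.snd ≫ V.d n =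
        ((biprod.inl ≫ eqToHom hv1.symm) ≫ J ≫ biprod.snd) ≫ V.d n from by
          simp [Category.assoc],
        pp_pull_comp, hVd, pp_pull_zero]
    rw [hsum2, add_zero, hφtop]
    rw [show (biprod.inl ≫ eqToHom hv1.symm) ≫ J ≫ biprod.fst ≫
          (biprod.inr ≫ eqToHom hv1.symm) =
        ((biprod.inl ≫ eqToHom hv1.symm) ≫ J ≫ biprod.fst) ≫
          (biprod.inr ≫ eqToHom hv1.symm) from by simp [Category.assoc],
      pp_pull_comp, hps, pp_push_pull]
  calc θ = push (eqToHom hv0) (push (eqToHom hv0.symm) θ) := (hcan θ).symm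
    _ = push (eqToHom hv0) (pull (biprod.inl ≫ eqToHom hv1.symm) ρ') := by rw [hι]
    _ = push (eqToHom hv0) (push (eqToHom hv0.symm)
          (pull ((biprod.inl ≫ eqToHom hv1.symm) ≫ J ≫ biprod.fst) δP)) := by rw [hstep]
    _ = pull ((biprod.inl ≫ eqToHom hv1.symm) ≫ J ≫ biprod.fst) δP := hcan _

theorem statement_14 {C : Type u} [Category.{v} C] [Preadditive C] [HasZeroObject C]
    [HasFiniteBiproducts C] [HasBinaryBiproducts C]
    (E : Cᵒᵖ ⥤ C ⥤ AddCommGrpCat.{v}) [∀ X : Cᵒᵖ, (E.obj X).Additive] [E.Additive]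
    (n : ℕ) (hn : 0 < n) (σ : NExStruct n C E)
    (htriv : ∀ X : C, TrivialInflation σ X ∧ TrivialDeflation σ X)
    (F : C ⥤ C) (cpx : C → ExCpx n C)
    (hc0 : ∀ X : C, (cpx X).obj 0 = X) (hctop : ∀ X : C, (cpx X).obj (n + 1) = F.obj X)
    (hmid : ∀ (X : C) (i : ℕ), 1 ≤ i → i ≤ n → IsZero ((cpx X).obj i))
    (δ : ∀ X : C, EE E (F.obj X) X)
    (hdist : ∀ X : C, σ.Dist (cpx X) (castE (hctop X).symm (hc0 X).symm (δ X)))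
    (hF : ∀ {X Y : C} (f : X ⟶ Y), push f (δ X) = pull (F.map f) (δ Y)) :
    (∀ {A B D : C} (f : A ⟶ B) (g : B ⟶ D),
      HInflationOf F (DistR σ F δ) f → HInflationOf F (DistR σ F δ) g →
      HInflationOf F (DistR σ F δ) (f ≫ g)) ∧
    (∀ {A B D : C} (f : A ⟶ B) (g : B ⟶ D),
      HDeflationOf F (DistR σ F δ) f → HDeflationOf F (DistR σ F δ) g →
      HDeflationOf F (DistR σ F δ) (f ≫ g)) := by
  have hconv : ∀ (Z : ExCpx n C) (ζ : EE E (Z.obj (n + 1)) (Z.obj 0)), σ.Dist Z ζ →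
      ∃ ε : Z.obj (n + 1) ⟶ F.obj (Z.obj 0), σ.Dist Z (pull ε (δ (Z.obj 0))) := by
    intro Z ζ hZ
    obtain ⟨c, hc⟩ := surj_aux E hn σ (cpx (Z.obj 0))
      (castE (hctop (Z.obj 0)).symm (hc0 (Z.obj 0)).symm (δ (Z.obj 0)))
      (hdist (Z.obj 0)) (hmid (Z.obj 0) 1 le_rfl hn)
      (Z.obj (n + 1)) (castE rfl (hc0 (Z.obj 0)).symm ζ)
    have hz := pp_unpack (hc0 (Z.obj 0)) (hctop (Z.obj 0)) (δ (Z.obj 0)) ζ c hc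
    exact ⟨c ≫ eqToHom (hctop (Z.obj 0)), by rw [← hz]; exact hZ⟩
  constructor
  · intro A B D f g hf hg
    obtain ⟨X, ε, h0, h1, hR, hd⟩ := hf
    obtain ⟨Y, ε', k0, k1, kR, kd⟩ := hg
    obtain ⟨Z, ζ, z0, z1, zD, zd⟩ := σ.ea1_infl f g
      ⟨X, pull ε (δ (X.obj 0)), h0, h1, hR, hd⟩
      ⟨Y, pull ε' (δ (Y.obj 0)), k0, k1, kR, kd⟩
    obtain ⟨ε'', hε⟩ := hconv Z ζ zD
    exact ⟨Z, ε'', z0, z1, hε, zd⟩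
  · intro A B D f g hf hg
    obtain ⟨X, ε, h0, h1, hR, hd⟩ := hf
    obtain ⟨Y, ε', k0, k1, kR, kd⟩ := hg
    obtain ⟨Z, ζ, z0, z1, zD, zd⟩ := σ.ea1_defl f g
      ⟨X, pull ε (δ (X.obj 0)), h0, h1, hR, hd⟩
      ⟨Y, pull ε' (δ (Y.obj 0)), k0, k1, kR, kd⟩
    obtain ⟨ε'', hε⟩ := hconv Z ζ zD
    exact ⟨Z, ε'', z0, z1, hε, zd⟩


end Paper
end
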